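/- Let N ≥ 1, κ ≥ 0, let ã and B be bilinear forms on ℝ^N with |B(x,y)| ≤ M_B‖x‖‖y‖ for all x, y (M_B ≥ 0), let d ∈ ℝ^N have nonnegative entries defining s(v,w) = Σᵢ dᵢ vᵢ wᵢ, and assume there exists c > 0 such that ã(v⁺ − w⁺, v − w) + s(v⁻ − w⁻, v − w) ≥ c‖v − w‖² for all v, w ∈ ℝ^N, where ‖·‖ is the Euclidean norm. Let f : ℝ^N → ℝ be linear with |f(v)| ≤ F‖v‖ for all v. If ẑ ∈ ℝ^N and z ∈ ℝ^N satisfies ã(z⁺, v) + s(z⁻, v) = f(v) − B(ẑ⁺, v) for all v ∈ ℝ^N, then ‖z‖ ≤ (F + M_B κ √N)/c. In particular, the fixed-point map ẑ ↦ z maps all of ℝ^N into a fixed closed ball. -/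

import Mathlib

open scoped BigOperators

/-- Componentwise clipping to `[0, κ]` on Euclidean space. -/
noncomputable def clipE {N : ℕ} (κ : ℝ) (v : EuclideanSpace ℝ (Fin N)) :
    EuclideanSpace ℝ (Fin N) :=
  WithLp.toLp 2 (fun i => max 0 (min (v i) κ))

lemma clipE_zero {N : ℕ} (κ : ℝ) (hκ : 0 ≤ κ) :
    clipE κ (0 : EuclideanSpace ℝ (Fin N)) = 0 := by
  ext i
  simp [clipE, min_eq_left hκ]

lemma clipE_norm_le {N : ℕ} (κ : ℝ) (hκ : 0 ≤ κ) (v : EuclideanSpace ℝ (Fin N)) :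
    ‖clipE κ v‖ ≤ κ * Real.sqrt N := by
  have h : ‖clipE κ v‖ = Real.sqrt (∑ i, ‖clipE κ v i‖ ^ 2) :=
    EuclideanSpace.norm_eq _
  rw [h]
  have hb : ∀ i : Fin N, ‖clipE κ v i‖ ^ 2 ≤ κ ^ 2 := by
    intro i
    have h1 : 0 ≤ clipE κ v i := show 0 ≤ max 0 (min (v i) κ) from le_max_left _ _
    have h2 : clipE κ v i ≤ κ := max_le hκ (min_le_right _ _)
    rw [Real.norm_eq_abs, sq_abs]
    exact pow_le_pow_left₀ h1 h2 2
  calc Real.sqrt (∑ i, ‖clipE κ v i‖ ^ 2)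
      ≤ Real.sqrt (∑ _i : Fin N, κ ^ 2) := by
        apply Real.sqrt_le_sqrt
        exact Finset.sum_le_sum fun i _ => hb i
    _ = κ * Real.sqrt N := by
        rw [Finset.sum_const, Finset.card_fin, nsmul_eq_mul,
          Real.sqrt_mul (by positivity), Real.sqrt_sq hκ]
        ring

/-- ball invariance of the fixed-point map: if `z` solves the monotone
clipped problem with right-hand side `f(·) − B(zhat⁺, ·)`, then
`‖z‖ ≤ (F + M_B κ √N)/c`. -/
theorem fixed_point_map_ball_invariant (N : ℕ) (hN : 1 ≤ N) (κ : ℝ) (hκ : 0 ≤ κ)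
    (A B : EuclideanSpace ℝ (Fin N) →ₗ[ℝ] EuclideanSpace ℝ (Fin N) →ₗ[ℝ] ℝ)
    (MB : ℝ) (hMB : 0 ≤ MB)
    (hB : ∀ x y : EuclideanSpace ℝ (Fin N), |B x y| ≤ MB * ‖x‖ * ‖y‖)
    (d : Fin N → ℝ) (hd : ∀ i, 0 ≤ d i)
    (s : EuclideanSpace ℝ (Fin N) → EuclideanSpace ℝ (Fin N) → ℝ)
    (hs : ∀ v w : EuclideanSpace ℝ (Fin N), s v w = ∑ i, d i * v i * w i)
    (c : ℝ) (hc : 0 < c)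
    (hmono : ∀ v w : EuclideanSpace ℝ (Fin N),
      c * ‖v - w‖ ^ 2 ≤
        A (clipE κ v - clipE κ w) (v - w)
          + s ((v - clipE κ v) - (w - clipE κ w)) (v - w))
    (f : EuclideanSpace ℝ (Fin N) →ₗ[ℝ] ℝ) (F : ℝ)
    (hf : ∀ v : EuclideanSpace ℝ (Fin N), |f v| ≤ F * ‖v‖)
    (zhat z : EuclideanSpace ℝ (Fin N))
    (hz : ∀ v : EuclideanSpace ℝ (Fin N),
      A (clipE κ z) v + s (z - clipE κ z) v = f v - B (clipE κ zhat) v) :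
    ‖z‖ ≤ (F + MB * κ * Real.sqrt N) / c := by
  have hF : 0 ≤ F := by
    have hv : ‖(EuclideanSpace.single ⟨0, hN⟩ (1:ℝ) : EuclideanSpace ℝ (Fin N))‖ = 1 := by
      simp [EuclideanSpace.norm_single]
    have := hf (EuclideanSpace.single ⟨0, hN⟩ (1:ℝ))
    rw [hv, mul_one] at this
    exact le_trans (abs_nonneg _) this
  have hclip : ‖clipE κ zhat‖ ≤ κ * Real.sqrt N := clipE_norm_le κ hκ zhat
  have key := hmono z 0
  rw [clipE_zero κ hκ] at key
  simp only [sub_zero] at key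
  have key2 : c * ‖z‖ ^ 2 ≤ f z - B (clipE κ zhat) z := by
    rw [← hz z]; exact key
  have hbound : f z - B (clipE κ zhat) z ≤ (F + MB * κ * Real.sqrt N) * ‖z‖ := by
    have h1 : f z ≤ F * ‖z‖ := le_trans (le_abs_self _) (hf z)
    have h2 : -(B (clipE κ zhat) z) ≤ MB * ‖clipE κ zhat‖ * ‖z‖ :=
      le_trans (neg_le_abs _) (hB _ _)
    have h3 : MB * ‖clipE κ zhat‖ * ‖z‖ ≤ MB * (κ * Real.sqrt N) * ‖z‖ := by
      apply mul_le_mul_of_nonneg_right _ (norm_nonneg z)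
      exact mul_le_mul_of_nonneg_left hclip hMB
    nlinarith [norm_nonneg z]
  have h4 : c * ‖z‖ ^ 2 ≤ (F + MB * κ * Real.sqrt N) * ‖z‖ := le_trans key2 hbound
  rcases eq_or_lt_of_le (norm_nonneg z) with h0 | h0
  · rw [← h0]
    positivity
  · rw [le_div_iff₀ hc]
    nlinarith
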